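/- Let G be a connected undirected graph with nonnegative edge weights, let p* be a path from s to t, and let E' be a minimum-cost edge set (with positive removal costs) whose removal makes p* the shortest path from s to t. Then the graph (V, E \ E') remains connected. -/

import Mathlib

open SimpleGraph

/-- Length of a walk with respect to edge weights `w`. -/
noncomputable def walkLen {V : Type*} {G : SimpleGraph V} (w : Sym2 V → ℝ) {s t : V}
    (p : G.Walk s t) : ℝ := (p.edges.map w).sum

/-- An attack: a set of edges of `G`, disjoint from the edges of the target path `p`,
whose removal makes `p` a shortest `s`–`t` path. -/
def IsAttack {V : Type*} (G : SimpleGraph V) (w : Sym2 V → ℝ) {s t : V}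
    (p : G.Walk s t) (E' : Finset (Sym2 V)) : Prop :=
  ↑E' ⊆ G.edgeSet ∧ (∀ e ∈ p.edges, e ∉ E') ∧
    ∀ q : (G.deleteEdges ↑E').Walk s t, q.IsPath → walkLen w p ≤ walkLen w q

/-- If `u` and `v` are not reachable in `G.deleteEdges E'` but are joined by a walk in `G`,
then some `G`-adjacent pair is unreachable in `G.deleteEdges E'`. -/
lemma exists_bad_edge {V : Type*} {G : SimpleGraph V} {E' : Set (Sym2 V)} :
    ∀ {u v : V} (_ : G.Walk u v), ¬ (G.deleteEdges E').Reachable u v →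
      ∃ a b, G.Adj a b ∧ ¬ (G.deleteEdges E').Reachable a b := by
  intro u v W
  induction W with
  | nil => intro h; exact absurd (Reachable.refl _) h
  | @cons x₁ x₂ x₃ h W' ih =>
    intro hur
    by_cases h1 : (G.deleteEdges E').Reachable x₁ x₂
    · exact ih (fun h2 => hur (h1.trans h2))
    · exact ⟨_, _, h, h1⟩

/-- Crossing lemma: a walk in `G.deleteEdges (E'.erase e)` with no duplicate edges that
uses `e = s(a,b)` gives reachability to the endpoints of `e` in `G.deleteEdges E'`. -/
lemma cross_lemma {V : Type*} [DecidableEq (Sym2 V)] {G : SimpleGraph V} {E' : Finset (Sym2 V)} {a b : V} :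
    ∀ {x y : V} (q : (G.deleteEdges ↑(E'.erase s(a, b))).Walk x y),
      q.edges.Nodup → s(a, b) ∈ q.edges →
      ((G.deleteEdges (↑E' : Set (Sym2 V))).Reachable x a ∧
        (G.deleteEdges (↑E' : Set (Sym2 V))).Reachable b y) ∨
      ((G.deleteEdges (↑E' : Set (Sym2 V))).Reachable x b ∧
        (G.deleteEdges (↑E' : Set (Sym2 V))).Reachable a y) := by
  intro x y q
  induction q with
  | nil => intro _ h; simp at h
  | @cons x x' y h q' ih =>
    intro hnd hmem
    have hnd' : q'.edges.Nodup := (List.nodup_cons.mp (by simpa using hnd)).2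
    by_cases hf : s(x, x') = s(a, b)
    · -- the first edge is e; the rest of the walk avoids e, hence lives in G \ E'
      have hne : s(a, b) ∉ q'.edges := by
        have h0 := (List.nodup_cons.mp (by simpa using hnd)).1
        rwa [hf] at h0
      have hq'' : ∀ f ∈ q'.edges, f ∈ (G.deleteEdges (↑E' : Set (Sym2 V))).edgeSet := by
        intro f hf'
        have := q'.edges_subset_edgeSet hf'
        rw [SimpleGraph.edgeSet_deleteEdges] at this ⊢
        refine ⟨this.1, ?_⟩
        intro hfE
        exact this.2 (Finset.mem_coe.mpr (Finset.mem_erase.mpr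
          ⟨fun hfe => hne (hfe ▸ hf'), hfE⟩))
      have hreach : (G.deleteEdges (↑E' : Set (Sym2 V))).Reachable x' y :=
        ⟨q'.transfer _ hq''⟩
      rw [Sym2.eq_iff] at hf
      rcases hf with ⟨hxa, hxb⟩ | ⟨hxb, hxa⟩
      · subst hxa; subst hxb; exact Or.inl ⟨Reachable.refl _, hreach⟩
      · subst hxa; subst hxb; exact Or.inr ⟨Reachable.refl _, hreach⟩
    · -- the first edge is not e, so it survives in G \ E'
      have hmem' : s(a, b) ∈ q'.edges := by
        have hm := hmem
        rw [Walk.edges_cons, List.mem_cons] at hm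
        rcases hm with h1 | h1
        · exact absurd h1.symm hf
        · exact h1
      have hadj : (G.deleteEdges (↑E' : Set (Sym2 V))).Adj x x' := by
        rw [deleteEdges_adj] at h ⊢
        refine ⟨h.1, fun hE => h.2 ?_⟩
        exact Finset.mem_coe.mpr (Finset.mem_erase.mpr ⟨hf, Finset.mem_coe.mp hE⟩)
      rcases ih hnd' hmem' with ⟨h1, h2⟩ | ⟨h1, h2⟩
      · exact Or.inl ⟨hadj.reachable.trans h1, h2⟩
      · exact Or.inr ⟨hadj.reachable.trans h1, h2⟩

/-- A minimum-cost attack (positive removal costs, nonnegative weights) never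
disconnects a connected graph. -/
theorem stmt0 {V : Type*} [Fintype V] (G : SimpleGraph V) (hG : G.Connected)
    (w : Sym2 V → ℝ) (hw : ∀ e, 0 ≤ w e)
    (c : Sym2 V → ℝ) (hc : ∀ e, 0 < c e)
    (s t : V) (p : G.Walk s t) (hp : p.IsPath)
    (E' : Finset (Sym2 V)) (hE' : IsAttack G w p E')
    (hmin : ∀ F : Finset (Sym2 V), IsAttack G w p F → ∑ e ∈ E', c e ≤ ∑ e ∈ F, c e) :
    (G.deleteEdges ↑E').Connected := by
  classical
  obtain ⟨hsub, hdisj, hshort⟩ := hE'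
  -- p transfers to G \ E'
  have hpE : ∀ f ∈ p.edges, f ∉ (↑E' : Set (Sym2 V)) := fun f hf => hdisj f hf
  have hst : (G.deleteEdges (↑E' : Set (Sym2 V))).Reachable s t := ⟨p.toDeleteEdges _ hpE⟩
  by_contra hcon
  rw [connected_iff] at hcon
  push_neg at hcon
  have hpre : ¬ (G.deleteEdges (↑E' : Set (Sym2 V))).Preconnected := by
    intro h; exact (hcon h).false s
  rw [Preconnected] at hpre
  push_neg at hpre
  obtain ⟨u, v, huv⟩ := hpre
  obtain ⟨a, b, hab, hnr⟩ := exists_bad_edge (hG.preconnected u v).some huv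
  have heE : s(a, b) ∈ E' := by
    by_contra h
    exact hnr (Adj.reachable (deleteEdges_adj.mpr ⟨hab, h⟩))
  -- the reduced attack
  have hattack : IsAttack G w p (E'.erase s(a, b)) := by
    refine ⟨fun f hf => hsub (Finset.mem_coe.mpr
      (Finset.mem_of_mem_erase (Finset.mem_coe.mp hf))), ?_, ?_⟩
    · intro f hf hfe
      exact hdisj f hf (Finset.mem_of_mem_erase hfe)
    · intro q hq
      by_cases hmem : s(a, b) ∈ q.edges
      · exfalso
        rcases cross_lemma q hq.edges_nodup hmem with ⟨h1, h2⟩ | ⟨h1, h2⟩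
        · exact hnr ((h1.symm.trans hst).trans h2.symm)
        · exact hnr ((h2.trans hst.symm).trans h1)
      · -- q avoids e, so it transfers to G \ E'
        have hq'' : ∀ f ∈ q.edges, f ∈ (G.deleteEdges (↑E' : Set (Sym2 V))).edgeSet := by
          intro f hf'
          have := q.edges_subset_edgeSet hf'
          rw [SimpleGraph.edgeSet_deleteEdges] at this ⊢
          refine ⟨this.1, fun hfE => this.2 ?_⟩
          exact Finset.mem_coe.mpr (Finset.mem_erase.mpr ⟨fun h => hmem (h ▸ hf'), hfE⟩)
        have := hshort (q.transfer _ hq'') (hq.transfer hq'')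
        rwa [show walkLen w (q.transfer _ hq'') = walkLen w q by
          simp [walkLen, Walk.edges_transfer]] at this
  have hlt : ∑ e ∈ E'.erase s(a, b), c e < ∑ e ∈ E', c e := by
    have := Finset.sum_erase_add E' c heE
    linarith [hc s(a, b)]
  exact absurd (hmin _ hattack) (not_le.mpr hlt)
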